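/- The L2-diameter of the K-norm ball of radius τ in R^n equals max(2τ, 2τ√n/K). -/
import Mathlib

private lemma enorm_eq {n : ℕ} (x : Fin n → ℝ) :
    ‖(WithLp.equiv 2 (Fin n → ℝ)).symm x‖ = Real.sqrt (∑ i, (x i)^2) := by
  rw [EuclideanSpace.norm_eq]
  simp [sq_abs]

theorem kNorm_ball_diameter {n K : ℕ} (hn : 1 ≤ n) (hK1 : 1 ≤ K) (hKn : K ≤ n)
    (τ : ℝ) (hτ : 0 < τ) :
    IsGreatest {d : ℝ | ∃ x ∈ convexHull ℝ ({x : Fin n → ℝ | (∑ i, |x i|) ≤ τ} ∪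
          {x : Fin n → ℝ | ∀ i, |x i| ≤ τ / K}),
        ∃ y ∈ convexHull ℝ ({x : Fin n → ℝ | (∑ i, |x i|) ≤ τ} ∪
          {x : Fin n → ℝ | ∀ i, |x i| ≤ τ / K}),
        d = Real.sqrt (∑ i, (x i - y i) ^ 2)}
      (max (2 * τ) (2 * τ * Real.sqrt n / K)) := by
  have hK0 : (0 : ℝ) < K := by positivity
  have hn0 : (0 : ℝ) < n := by exact_mod_cast hn
  set S : Set (Fin n → ℝ) := ({x : Fin n → ℝ | (∑ i, |x i|) ≤ τ} ∪
      {x : Fin n → ℝ | ∀ i, |x i| ≤ τ / K}) with hS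
  set L : (Fin n → ℝ) ≃ₗ[ℝ] EuclideanSpace ℝ (Fin n) :=
    (WithLp.linearEquiv 2 ℝ (Fin n → ℝ)).symm with hL
  have hLcoe : ∀ x : Fin n → ℝ, L x = (WithLp.equiv 2 (Fin n → ℝ)).symm x := fun _ => rfl
  set r : ℝ := max τ (τ * Real.sqrt n / K) with hr
  -- upper bound over S
  have hSr : S ⊆ {x : Fin n → ℝ | ‖L x‖ ≤ r} := by
    rintro x (hx | hx)
    · have h1 : Real.sqrt (∑ i, (x i)^2) ≤ ∑ i, |x i| := by
        rw [show (∑ i, |x i|) = Real.sqrt ((∑ i, |x i|)^2) by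
          rw [Real.sqrt_sq (by positivity)]]
        apply Real.sqrt_le_sqrt
        have := Finset.sum_sq_le_sq_sum_of_nonneg (f := fun i => |x i|)
          (s := Finset.univ) (fun i _ => abs_nonneg _)
        simpa [sq_abs] using this
      have : ‖L x‖ ≤ τ := by
        rw [hLcoe, enorm_eq]; exact h1.trans hx
      exact this.trans (le_max_left _ _)
    · have h1 : Real.sqrt (∑ i, (x i)^2) ≤ τ * Real.sqrt n / K := by
        have hsum : (∑ i, (x i)^2) ≤ (n : ℝ) * (τ/K)^2 := by
          calc (∑ i, (x i)^2) ≤ ∑ _i : Fin n, (τ/K)^2 := by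
                apply Finset.sum_le_sum
                intro i _
                rw [← sq_abs]
                exact pow_le_pow_left₀ (abs_nonneg _) (hx i) 2
            _ = (n : ℝ) * (τ/K)^2 := by rw [Finset.sum_const, Finset.card_univ, Fintype.card_fin, nsmul_eq_mul]
        calc Real.sqrt (∑ i, (x i)^2) ≤ Real.sqrt ((n : ℝ) * (τ/K)^2) :=
              Real.sqrt_le_sqrt hsum
          _ = τ * Real.sqrt n / K := by
              rw [Real.sqrt_mul (le_of_lt hn0), Real.sqrt_sq (by positivity)]
              ring
      have : ‖L x‖ ≤ τ * Real.sqrt n / K := by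
        rw [hLcoe, enorm_eq]; exact h1
      exact this.trans (le_max_right _ _)
  have hconv : Convex ℝ {x : Fin n → ℝ | ‖L x‖ ≤ r} := by
    have : {x : Fin n → ℝ | ‖L x‖ ≤ r} = (L : (Fin n → ℝ) →ₗ[ℝ] EuclideanSpace ℝ (Fin n)) ⁻¹'
        Metric.closedBall 0 r := by
      ext x; simp [Metric.mem_closedBall, dist_zero_right]
    rw [this]
    exact (convex_closedBall 0 r).linear_preimage _
  have hhull : convexHull ℝ S ⊆ {x : Fin n → ℝ | ‖L x‖ ≤ r} :=
    convexHull_min hSr hconv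
  constructor
  · -- membership: the max is achieved
    simp only [Set.mem_setOf_eq]
    rcases le_or_gt (Real.sqrt n) (K : ℝ) with h | h
    · -- max = 2τ, achieved in B1
      have hmax : max (2 * τ) (2 * τ * Real.sqrt n / K) = 2 * τ := by
        apply max_eq_left
        rw [div_le_iff₀ hK0]
        calc 2 * τ * Real.sqrt n ≤ 2 * τ * K := by
              apply mul_le_mul_of_nonneg_left h (by positivity)
          _ = 2 * τ * K := rfl
      set x : Fin n → ℝ := fun i => if i = ⟨0, hn⟩ then τ else 0 with hx
      have hsum : (∑ i, |x i|) = τ := by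
        rw [Finset.sum_eq_single ⟨0, hn⟩]
        · simp [hx, abs_of_pos hτ]
        · intro b _ hb; simp [hx, hb]
        · simp
      have hxS : x ∈ S := by
        left
        exact le_of_eq hsum
      have hxS' : -x ∈ S := by
        left
        have : (∑ i, |(-x) i|) = ∑ i, |x i| := by
          apply Finset.sum_congr rfl; intro i _; simp
        simp only [Set.mem_setOf_eq]
        rw [this, hsum]
      refine ⟨x, subset_convexHull ℝ S hxS, -x, subset_convexHull ℝ S hxS', ?_⟩
      · rw [hmax]
        have : (∑ i, (x i - (-x) i)^2) = (2*τ)^2 := by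
          rw [Finset.sum_eq_single ⟨0, hn⟩]
          · simp [hx]; ring
          · intro b _ hb; simp [hx, hb]
          · simp
        rw [this, Real.sqrt_sq (by positivity)]
    · -- max = 2τ√n/K, achieved in B∞
      have hmax : max (2 * τ) (2 * τ * Real.sqrt n / K) = 2 * τ * Real.sqrt n / K := by
        apply max_eq_right
        rw [le_div_iff₀ hK0]
        have : 2 * τ * K ≤ 2 * τ * Real.sqrt n :=
          mul_le_mul_of_nonneg_left h.le (by positivity)
        linarith
      set x : Fin n → ℝ := fun _ => τ / K with hx
      have hxS : x ∈ S := by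
        right
        intro i
        simp [hx, abs_of_pos (div_pos hτ hK0)]
      have hxS' : -x ∈ S := by
        right
        intro i
        simp [hx, abs_of_pos (div_pos hτ hK0)]
      refine ⟨x, subset_convexHull ℝ S hxS, -x, subset_convexHull ℝ S hxS', ?_⟩
      rw [hmax]
      have : (∑ i, (x i - (-x) i)^2) = (n : ℝ) * (2*τ/K)^2 := by
        rw [show (∑ i, (x i - (-x) i)^2) = ∑ _i : Fin n, (2*τ/(K:ℝ))^2 from
          Finset.sum_congr rfl (by intro i _; simp only [hx, Pi.neg_apply]; ring),
          Finset.sum_const, Finset.card_univ, Fintype.card_fin, nsmul_eq_mul]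
      rw [this, Real.sqrt_mul (le_of_lt hn0), Real.sqrt_sq (by positivity)]
      ring
  · -- upper bound
    rintro d ⟨x, hxm, y, hym, rfl⟩
    have hx := hhull hxm
    have hy := hhull hym
    have key : Real.sqrt (∑ i, (x i - y i)^2) = ‖L x - L y‖ := by
      rw [← map_sub, hLcoe, enorm_eq]
      rfl
    rw [key]
    calc ‖L x - L y‖ ≤ ‖L x‖ + ‖L y‖ := norm_sub_le _ _
      _ ≤ r + r := add_le_add hx hy
      _ ≤ max (2 * τ) (2 * τ * Real.sqrt n / K) := by
          rw [hr]
          rcases le_total τ (τ * Real.sqrt n / K) with h | h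
          · rw [max_eq_right h]
            apply le_max_of_le_right
            have heq : 2 * τ * Real.sqrt n / K = τ * Real.sqrt n / K + τ * Real.sqrt n / K := by
              ring
            rw [heq]
          · rw [max_eq_left h]
            exact le_max_of_le_left (by linarith)
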